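/- Let (i, p, h) be a deformation retraction between chain complexes (C₂, d₂) and (C₁, d₁) of modules over a commutative ring. For a chain complex C and r ∈ ℤ, let Homʳ(C, C) denote the module of degree-r graded maps f (families f_m : C_m → C_{m+r}) with differential δ(f) = d∘f − (−1)^r f∘d, forming the Hom-complex Hom•(C, C). Then the map g : Hom•(C₁, C₁) → Hom•(C₂, C₂) given by g(f) = p∘f∘i is a map of complexes (δ∘g = g∘δ) and a quasi-isomorphism: it induces an isomorphism on cohomology in every degree. -/

import Mathlib

noncomputable section

/-- A ℤ-indexed chain complex of modules over a commutative ring `R`, with differential of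
degree `−1`.  The differential is indexed by pairs of degrees related by `i = j + 1`
(so `d i j : X i →ₗ[R] X j`). -/
structure Cx (R : Type) [CommRing R] where
  X : ℤ → Type
  [isAddCommGroup : ∀ i, AddCommGroup (X i)]
  [isModule : ∀ i, Module R (X i)]
  d : ∀ (i j : ℤ), i = j + 1 → (X i →ₗ[R] X j)
  dd : ∀ (i j k : ℤ) (h1 : i = j + 1) (h2 : j = k + 1), (d j k h2) ∘ₗ (d i j h1) = 0

attribute [instance] Cx.isAddCommGroup Cx.isModule

variable {R : Type} [CommRing R]

/-- A chain map between chain complexes. -/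
@[ext]
structure ChainMap (C D : Cx R) where
  f : ∀ i, C.X i →ₗ[R] D.X i
  comm : ∀ (i j : ℤ) (hij : i = j + 1), (D.d i j hij) ∘ₗ (f i) = (f j) ∘ₗ (C.d i j hij)

/-- Composition of chain maps (`a.comp b` applies `b` first). -/
def ChainMap.comp {C D E : Cx R} (a : ChainMap D E) (b : ChainMap C D) : ChainMap C E where
  f i := (a.f i) ∘ₗ (b.f i)
  comm i j hij := by
    rw [← LinearMap.comp_assoc, a.comm, LinearMap.comp_assoc, b.comm, LinearMap.comp_assoc]

/-- The identity chain map. -/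
def ChainMap.id (C : Cx R) : ChainMap C C where
  f _ := LinearMap.id
  comm _ _ _ := rfl

/-- A graded map of degree `r` between chain complexes: a family of maps
`C_m → D_{m + r}`, indexed by pairs of degrees related by `m + r = n`. -/
abbrev GMap (C D : Cx R) (r : ℤ) := ∀ (m n : ℤ), m + r = n → (C.X m →ₗ[R] D.X n)

/-- A deformation retraction between chain complexes `(C₂, d₂)` and `(C₁, d₁)`:
chain maps `i : C₂ → C₁`, `p : C₁ → C₂` with `p∘i = id`, and a degree `+1` homotopy `h`
with `id − i∘p = d₁∘h + h∘d₁`. -/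
structure DefRetract (C₂ C₁ : Cx R) where
  i : ChainMap C₂ C₁
  p : ChainMap C₁ C₂
  h : GMap C₁ C₁ 1
  pi : ∀ m : ℤ, (p.f m) ∘ₗ (i.f m) = LinearMap.id
  homotopy : ∀ m : ℤ,
    (LinearMap.id : C₁.X m →ₗ[R] C₁.X m) - (i.f m) ∘ₗ (p.f m)
      = (C₁.d (m + 1) m rfl) ∘ₗ (h m (m + 1) rfl)
        + (h (m - 1) m (by omega)) ∘ₗ (C₁.d m (m - 1) (by omega))

/-- Two chain maps `f, g : C → D` are homotopic if `f − g = d∘K + K∘d` for some degree `+1`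
graded map `K`. -/
def Homotopic {C D : Cx R} (a b : ChainMap C D) : Prop :=
  ∃ K : GMap C D 1, ∀ m : ℤ,
    a.f m - b.f m
      = (D.d (m + 1) m rfl) ∘ₗ (K m (m + 1) rfl)
        + (K (m - 1) m (by omega)) ∘ₗ (C.d m (m - 1) (by omega))

end

namespace GMap

variable {R : Type} [CommRing R] {C D : Cx R} {r : ℤ}

instance : Zero (GMap C D r) := ⟨fun _ _ _ => 0⟩
instance : Add (GMap C D r) := ⟨fun f g => fun m n h => f m n h + g m n h⟩
instance : Neg (GMap C D r) := ⟨fun f => fun m n h => -(f m n h)⟩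
instance : Sub (GMap C D r) := ⟨fun f g => fun m n h => f m n h - g m n h⟩
instance : SMul ℤ (GMap C D r) := ⟨fun z f => fun m n h => z • f m n h⟩
instance : SMul ℕ (GMap C D r) := ⟨fun z f => fun m n h => z • f m n h⟩

instance instAddCommGroup : AddCommGroup (GMap C D r) where
  add_assoc f g k := by funext m n h; exact add_assoc _ _ _
  zero_add f := by funext m n h; exact zero_add _
  add_zero f := by funext m n h; exact add_zero _
  add_comm f g := by funext m n h; exact add_comm _ _
  neg_add_cancel f := by funext m n h; exact neg_add_cancel _
  sub_eq_add_neg f g := by funext m n h; exact sub_eq_add_neg _ _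
  nsmul n f := n • f
  nsmul_zero f := by funext m n h; exact zero_smul ℕ _
  nsmul_succ k f := by funext m n h; exact succ_nsmul _ _
  zsmul z f := z • f
  zsmul_zero' f := by funext m n h; exact zero_smul ℤ _
  zsmul_succ' k f := by
    funext m n h
    show ((k : ℤ) + 1) • f m n h = (k : ℤ) • f m n h + f m n h
    rw [add_smul, one_smul]
  zsmul_neg' k f := by
    funext m n h
    show (Int.negSucc k) • f m n h = -(((k : ℤ) + 1) • f m n h)
    rw [Int.negSucc_eq, neg_smul]

end GMap

section HomComplex

variable {R : Type} [CommRing R]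

/-- The differential of the Hom-complex: for a degree `r` graded map `f`,
`δ(f) = d∘f − (−1)^r f∘d`, a graded map of degree `r − 1` (here indexed by pairs
`(r, s)` with `s + 1 = r`). -/
def homDelta {C D : Cx R} (r s : ℤ) (hrs : s + 1 = r) (f : GMap C D r) : GMap C D s :=
  fun m n hmn =>
    (D.d (m + r) n (by omega)) ∘ₗ (f m (m + r) rfl)
      - ((Int.negOnePow r : ℤˣ) : ℤ) • ((f (m - 1) n (by omega)) ∘ₗ (C.d m (m - 1) (by omega)))

/-- The map `g(f) = p∘f∘i : Hom•(C₁, C₁) → Hom•(C₂, C₂)` induced by a deformation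
retraction, in each degree. -/
def homG {C₂ C₁ : Cx R} (ρ : DefRetract C₂ C₁) {r : ℤ} (f : GMap C₁ C₁ r) :
    GMap C₂ C₂ r :=
  fun m n hmn => (ρ.p.f n) ∘ₗ (f m n hmn) ∘ₗ (ρ.i.f m)

end HomComplex

section DRAux

variable {R : Type} [CommRing R]

lemma GMap.comp_congr {C D E : Cx R} {r s : ℤ} (f : GMap D E r) (g : GMap C D s)
    {a b b' n : ℤ} (hg : a + s = b) (hg' : a + s = b') (hf : b + r = n) (hf' : b' + r = n)
    (x : C.X a) :
    f b n hf (g a b hg x) = f b' n hf' (g a b' hg' x) := by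
  obtain rfl : b = b' := by omega
  rfl

lemma GMap.d_comp_congr {C D : Cx R} {r : ℤ} (f : GMap C D r) {a b b' n : ℤ}
    (h : a + r = b) (h' : a + r = b') (hb : b = n + 1) (hb' : b' = n + 1) (x : C.X a) :
    D.d b n hb (f a b h x) = D.d b' n hb' (f a b' h' x) := by
  obtain rfl : b = b' := by omega
  rfl

lemma GMap.comp_d_congr {C D : Cx R} {r : ℤ} (f : GMap C D r) {a b b' n : ℤ}
    (ha : a = b + 1) (ha' : a = b' + 1) (h : b + r = n) (h' : b' + r = n) (x : C.X a) :
    f b n h (C.d a b ha x) = f b' n h' (C.d a b' ha' x) := by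
  obtain rfl : b = b' := by omega
  rfl

/-- Conjugation of a graded map by a pair of chain maps. -/
def GMap.conj {C D : Cx R} (p : ChainMap C D) (i : ChainMap D C) {r : ℤ} (f : GMap C C r) :
    GMap D D r := fun m n h => p.f n ∘ₗ f m n h ∘ₗ i.f m

lemma GMap.conj_delta {C D : Cx R} (p : ChainMap C D) (i : ChainMap D C) (r s : ℤ)
    (hrs : s + 1 = r) (f : GMap C C r) :
    homDelta r s hrs (f.conj p i) = (homDelta r s hrs f).conj p i := by
  funext m n hmn
  ext x
  have hp : ∀ y, D.d (m + r) n (by omega) (p.f (m + r) y)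
      = p.f n (C.d (m + r) n (by omega) y) :=
    fun y => LinearMap.congr_fun (p.comm (m + r) n (by omega)) y
  have hi : ∀ y, C.d m (m - 1) (by omega) (i.f m y)
      = i.f (m - 1) (D.d m (m - 1) (by omega) y) :=
    fun y => LinearMap.congr_fun (i.comm m (m - 1) (by omega)) y
  simp only [GMap.conj, homDelta, LinearMap.sub_apply, LinearMap.comp_apply,
    LinearMap.smul_apply, map_sub, map_smul, map_zsmul, hp, hi]

/-- The idempotent `e = i ∘ p` of a deformation retraction. -/
def DefRetract.e {C₂ C₁ : Cx R} (ρ : DefRetract C₂ C₁) (m : ℤ) : C₁.X m →ₗ[R] C₁.X m :=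
  ρ.i.f m ∘ₗ ρ.p.f m

lemma DefRetract.e_comm {C₂ C₁ : Cx R} (ρ : DefRetract C₂ C₁) (a b : ℤ) (h : a = b + 1)
    (x : C₁.X a) : C₁.d a b h (ρ.e a x) = ρ.e b (C₁.d a b h x) := by
  have h1 := LinearMap.congr_fun (ρ.p.comm a b h) x
  have h2 := LinearMap.congr_fun (ρ.i.comm a b h) (ρ.p.f a x)
  simp only [LinearMap.comp_apply] at h1 h2
  simp only [DefRetract.e, LinearMap.comp_apply]
  rw [h2, h1]

/-- The homotopy `H(f) = −h∘f∘e − (−1)^k f∘h` used in the quasi-isomorphism proof. -/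
def DefRetract.Hmap {C₂ C₁ : Cx R} (ρ : DefRetract C₂ C₁) {k : ℤ} (f : GMap C₁ C₁ k) :
    GMap C₁ C₁ (k + 1) :=
  fun m n hmn =>
    -(ρ.h (m + k) n (by omega) ∘ₗ f m (m + k) rfl ∘ₗ ρ.e m)
      - ((Int.negOnePow k : ℤˣ) : ℤ) • (f (m + 1) n (by omega) ∘ₗ ρ.h m (m + 1) rfl)

lemma DefRetract.Hmap_delta {C₂ C₁ : Cx R} (ρ : DefRetract C₂ C₁) {k : ℤ}
    (f : GMap C₁ C₁ k) (hf : homDelta k (k - 1) (Int.sub_add_cancel k 1) f = 0) :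
    homDelta (k + 1) k rfl (ρ.Hmap f)
      = (fun m n hmn => ρ.e n ∘ₗ f m n hmn ∘ₗ ρ.e m) - f := by
  have ε2 : ((Int.negOnePow k : ℤˣ) : ℤ) * ((Int.negOnePow k : ℤˣ) : ℤ) = 1 := by
    rw [← Units.val_mul, Int.units_mul_self]; rfl
  -- pointwise closedness
  have hcl : ∀ (a b : ℤ) (h : a + (k - 1) = b) (x : C₁.X a),
      C₁.d (a + k) b (by omega) (f a (a + k) rfl x)
        = ((Int.negOnePow k : ℤˣ) : ℤ) • f (a - 1) b (by omega) (C₁.d a (a - 1) (by omega) x) := by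
    intro a b h x
    have h0 : (0 : GMap C₁ C₁ (k - 1)) a b h = (0 : C₁.X a →ₗ[R] C₁.X b) := rfl
    have := LinearMap.congr_fun ((congrFun (congrFun (congrFun hf a) b) h).trans h0) x
    simpa [homDelta, sub_eq_zero] using this
  funext m n hmn
  subst hmn
  ext x
  simp only [homDelta, DefRetract.Hmap, LinearMap.sub_apply, LinearMap.comp_apply,
    LinearMap.smul_apply, LinearMap.neg_apply, map_sub, map_neg, map_smul, map_zsmul,
    Pi.sub_apply]
  have hom_mk : ∀ (a : ℤ) (y : C₁.X a),
      C₁.d (a + 1) a rfl (ρ.h a (a + 1) rfl y)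
        = y - ρ.e a y - ρ.h (a - 1) a (by omega) (C₁.d a (a - 1) (by omega) y) := by
    intro a y
    have h' := LinearMap.congr_fun (ρ.homotopy a) y
    simp only [LinearMap.sub_apply, LinearMap.add_apply, LinearMap.comp_apply,
      LinearMap.id_apply] at h'
    exact (eq_sub_of_add_eq h'.symm)
  rw [GMap.d_comp_congr ρ.h (show (m + k) + 1 = m + (k + 1) by omega)
        (show (m + k) + 1 = m + k + 1 from rfl) (show m + (k + 1) = (m + k) + 1 by omega)
        (show m + k + 1 = (m + k) + 1 from rfl)]
  rw [hom_mk (m + k)]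
  rw [hcl m (m + k - 1) (by omega)]
  rw [ρ.e_comm m (m - 1) (by omega)]
  rw [GMap.d_comp_congr f (show (m + 1) + k = m + (k + 1) by omega)
        (show (m + 1) + k = (m + 1) + k from rfl) (show m + (k + 1) = (m + k) + 1 by omega)
        (show (m + 1) + k = (m + k) + 1 by omega)]
  rw [hcl (m + 1) (m + k) (by omega)]
  rw [GMap.comp_d_congr f (show m + 1 = (m + 1 - 1) + 1 by omega)
        (show m + 1 = m + 1 from rfl) (show (m + 1 - 1) + k = m + k by omega)
        (show m + k = m + k from rfl)]
  rw [GMap.comp_congr ρ.h f (show (m - 1) + k = m - 1 + k from rfl)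
        (show (m - 1) + k = m + k - 1 by omega) (show (m - 1 + k) + 1 = m + k by omega)
        (show (m + k - 1) + 1 = m + k by omega)]
  rw [GMap.comp_congr f ρ.h (show (m - 1) + 1 = m - 1 + 1 from rfl)
        (show (m - 1) + 1 = m by omega) (show (m - 1 + 1) + k = m + k by omega)
        (show m + k = m + k from rfl)]
  have homx := LinearMap.congr_fun (ρ.homotopy m) x
  simp only [LinearMap.sub_apply, LinearMap.add_apply, LinearMap.comp_apply,
    LinearMap.id_apply] at homx
  have harg : ρ.e m x + (C₁.d (m + 1) m rfl (ρ.h m (m + 1) rfl x)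
      + ρ.h (m - 1) m (by omega) (C₁.d m (m - 1) (by omega) x)) = x := by
    rw [← homx]; simp only [DefRetract.e, LinearMap.comp_apply]; abel
  have hFsum : f m (m + k) rfl (ρ.e m x)
      + (f m (m + k) rfl (C₁.d (m + 1) m rfl (ρ.h m (m + 1) rfl x))
        + f m (m + k) rfl (ρ.h (m - 1) m (by omega) (C₁.d m (m - 1) (by omega) x)))
      = f m (m + k) rfl x := by
    rw [← map_add, ← map_add, harg]
  have hsub : (((fun m n hmn => ρ.e n ∘ₗ f m n hmn ∘ₗ ρ.e m) - f) m (m + k)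
        (rfl : m + k = m + k) : C₁.X m →ₗ[R] C₁.X (m + k)) x
      = ρ.e (m + k) (f m (m + k) rfl (ρ.e m x)) - f m (m + k) rfl x := rfl
  rw [hsub, ← hFsum]
  simp only [map_zsmul, Int.negOnePow_succ, Units.val_neg, neg_smul, one_smul, smul_neg,
    smul_add, smul_sub, smul_smul, ε2, neg_neg, smul_eq_mul, mul_assoc, mul_one]
  abel_nf
  rw [show ((-1 : ℤ) • ((Int.negOnePow k : ℤˣ) : ℤ)) * ((Int.negOnePow k : ℤˣ) : ℤ) = -1 from by
    rw [smul_eq_mul, mul_assoc, ε2, mul_one]]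

end DRAux

section DRAux2

variable {R : Type} [CommRing R]

lemma GMap.sub_apply {C D : Cx R} {r : ℤ} (a b : GMap C D r) (m n : ℤ) (h : m + r = n) :
    (a - b) m n h = a m n h - b m n h := rfl

lemma GMap.zero_apply {C D : Cx R} {r : ℤ} (m n : ℤ) (h : m + r = n) :
    (0 : GMap C D r) m n h = 0 := rfl

lemma homDelta_sub {C D : Cx R} (r s : ℤ) (hrs : s + 1 = r) (a b : GMap C D r) :
    homDelta r s hrs (a - b) = homDelta r s hrs a - homDelta r s hrs b := by
  funext m n h
  ext x
  simp only [homDelta, GMap.sub_apply, LinearMap.sub_apply, LinearMap.comp_apply,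
    LinearMap.smul_apply, map_sub, smul_sub]
  abel

end DRAux2


section Statement1

/-!
STATEMENT 1: given a deformation retraction `(i, p, h)` between `(C₂, d₂)` and `(C₁, d₁)`,
the map `g : Hom•(C₁,C₁) → Hom•(C₂,C₂)`, `g(f) = p∘f∘i`, is a map of complexes and a
quasi-isomorphism: it induces an isomorphism on cohomology in every degree (stated as
bijectivity on cohomology classes: surjectivity and injectivity up to coboundaries).
-/

variable {R : Type} [CommRing R]

theorem homG_chain_map_and_quasi_iso {C₂ C₁ : Cx R} (ρ : DefRetract C₂ C₁) :
    -- g is a map of complexes: δ∘g = g∘δ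
    (∀ (r s : ℤ) (hrs : s + 1 = r) (f : GMap C₁ C₁ r),
        homDelta r s hrs (homG ρ f) = homG ρ (homDelta r s hrs f)) ∧
    -- g induces an isomorphism on cohomology in every degree k:
    (∀ k : ℤ,
      -- surjectivity on cohomology
      (∀ ψ : GMap C₂ C₂ k, homDelta k (k - 1) (by omega) ψ = 0 →
        ∃ f : GMap C₁ C₁ k, homDelta k (k - 1) (by omega) f = 0 ∧
          ∃ u : GMap C₂ C₂ (k + 1),
            homG ρ f - ψ = homDelta (k + 1) k (by omega) u) ∧
      -- injectivity on cohomology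
      (∀ f : GMap C₁ C₁ k, homDelta k (k - 1) (by omega) f = 0 →
        (∃ u : GMap C₂ C₂ (k + 1), homG ρ f = homDelta (k + 1) k (by omega) u) →
        ∃ v : GMap C₁ C₁ (k + 1), f = homDelta (k + 1) k (by omega) v)) := by
  constructor
  · intro r s hrs f
    exact GMap.conj_delta ρ.p ρ.i r s hrs f
  · intro k
    constructor
    · -- surjectivity
      intro ψ hψ
      refine ⟨GMap.conj ρ.i ρ.p ψ, ?_, 0, ?_⟩
      · rw [show homDelta k (k - 1) (by omega) (GMap.conj ρ.i ρ.p ψ)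
              = GMap.conj ρ.i ρ.p (homDelta k (k - 1) (by omega) ψ) from
            GMap.conj_delta ρ.i ρ.p k (k - 1) (by omega) ψ, hψ]
        funext m n h
        ext x
        simp [GMap.conj, GMap.zero_apply]
      · funext m n h
        ext x
        have h1 := LinearMap.congr_fun (ρ.pi m) x
        have h2 := LinearMap.congr_fun (ρ.pi n)
          (ψ m n h x)
        simp only [LinearMap.comp_apply, LinearMap.id_apply] at h1 h2
        simp only [homG, GMap.conj, GMap.sub_apply, GMap.zero_apply, homDelta,
          LinearMap.sub_apply, LinearMap.comp_apply, LinearMap.smul_apply,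
          LinearMap.zero_apply, map_zero, smul_zero, sub_zero, h1, h2, sub_self]
    · -- injectivity
      rintro f hfc ⟨u, hu⟩
      refine ⟨GMap.conj ρ.i ρ.p u - ρ.Hmap f, ?_⟩
      rw [homDelta_sub, show homDelta (k + 1) k (by omega) (GMap.conj ρ.i ρ.p u)
            = GMap.conj ρ.i ρ.p (homDelta (k + 1) k (by omega) u) from
          GMap.conj_delta ρ.i ρ.p (k + 1) k (by omega) u, ← hu,
        ρ.Hmap_delta f hfc]
      funext m n h
      ext x
      simp only [GMap.conj, homG, GMap.sub_apply, LinearMap.sub_apply, LinearMap.comp_apply,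
        DefRetract.e]
      abel

end Statement1
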